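/- arXiv:2411.03026 — 3 statements merged into one kernel-verified Lean document; each statement's English description precedes it below -/
import Mathlib

section
/- Let M̲ > 0 and let V be a linear subspace of ℝⁿ. If the intervention σ lies in V, then the 'remainder' parts of the expenditure and total-surplus decompositions over eigenvalues smaller than M̲ in absolute value satisfy |Σ_{ℓ: |λ_ℓ| < M̲} (u^ℓ·q⁰)(u^ℓ·σ)| ≤ ‖P⊥_{L(D,M̲)} P_V‖·‖σ‖·‖q⁰‖ and |Σ_{ℓ: |λ_ℓ| < M̲} (|λ_ℓ|/(1+|λ_ℓ|))·(u^ℓ·q⁰)(u^ℓ·σ)| ≤ ‖P⊥_{L(D,M̲)} P_V‖·‖σ‖·‖q⁰‖. -/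
noncomputable section
open Matrix MeasureTheory Filter

/-- Vectors in `ℝⁿ` with the Euclidean norm/inner product. -/
abbrev Vec (n : ℕ) := EuclideanSpace ℝ (Fin n)

variable {n : ℕ}

/-- Price effect `ṗ = −(I − D)⁻¹ σ`. -/
def pDot (D : Matrix (Fin n) (Fin n) ℝ) (σ : Vec n) : Vec n :=
  -(Matrix.toEuclideanLin (1 - D)⁻¹ σ)

/-- Quantity effect `q̇ = D ṗ`. -/
def qDot (D : Matrix (Fin n) (Fin n) ℝ) (σ : Vec n) : Vec n :=
  Matrix.toEuclideanLin D (pDot D σ)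

/-- Expenditure derivative `Ṡ = σ·q⁰`. -/
def SDot (q σ : Vec n) : ℝ := inner ℝ σ q

/-- Consumer surplus derivative `Ċ = −q⁰·ṗ`. -/
def CDot (D : Matrix (Fin n) (Fin n) ℝ) (q σ : Vec n) : ℝ := -(inner ℝ q (pDot D σ) : ℝ)

/-- Producer surplus derivative `Ṗ = 2 q⁰·q̇`. -/
def PDot (D : Matrix (Fin n) (Fin n) ℝ) (q σ : Vec n) : ℝ := 2 * (inner ℝ q (qDot D σ) : ℝ)

/-- Total surplus derivative `Ẇ = Ċ + Ṗ − Ṡ`. -/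
def WDot (D : Matrix (Fin n) (Fin n) ℝ) (q σ : Vec n) : ℝ :=
  CDot D q σ + PDot D q σ - SDot q σ

/-- A normalized Slutsky matrix: symmetric, negative semidefinite, diagonal entries `−1`. -/
def IsSlutsky (D : Matrix (Fin n) (Fin n) ℝ) : Prop :=
  D.IsSymm ∧ (-D).PosSemidef ∧ ∀ i, D i i = -1

/-- The span of the eigenvectors of a matrix whose eigenvalues are at least `M`
in absolute value. -/
def eigSpan (A : Matrix (Fin n) (Fin n) ℝ) (M : ℝ) : Submodule ℝ (Vec n) :=
  ⨆ μ ∈ {μ : ℝ | M ≤ |μ|}, Module.End.eigenspace (Matrix.toEuclideanLin A) μ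

/-- Orthogonal projection onto a subspace, as a map into the ambient space. -/
def projVec (V : Submodule ℝ (Vec n)) (x : Vec n) : Vec n :=
  (V.orthogonalProjectionOnto x : Vec n)

/-- Orthogonal projection onto a subspace, as a continuous linear endomorphism. -/
def projCLM (V : Submodule ℝ (Vec n)) : Vec n →L[ℝ] Vec n :=
  V.subtypeL.comp (V.orthogonalProjectionOnto)

/-- Spectral (operator) norm of a matrix. -/
def specNorm (A : Matrix (Fin n) (Fin n) ℝ) : ℝ :=
  ‖LinearMap.toContinuousLinearMap (Matrix.toEuclideanLin A)‖

lemma stmt11_key (D : Matrix (Fin n) (Fin n) ℝ) (hsym : (Matrix.toEuclideanLin D).IsSymmetric)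
    (u : Fin n → Vec n) (lam : Fin n → ℝ) (hu : Orthonormal ℝ u)
    (heig : ∀ ℓ, Matrix.toEuclideanLin D (u ℓ) = lam ℓ • u ℓ)
    (q : Vec n) (Mlow : ℝ)
    (V : Submodule ℝ (Vec n)) (σ : Vec n) (hσ : σ ∈ V)
    (c : Fin n → ℝ) (hc0 : ∀ ℓ, 0 ≤ c ℓ) (hc1 : ∀ ℓ, c ℓ ≤ 1) :
    |∑ ℓ ∈ Finset.univ.filter (fun ℓ => |lam ℓ| < Mlow),
        c ℓ * ((inner ℝ (u ℓ) q : ℝ) * (inner ℝ (u ℓ) σ : ℝ))| ≤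
      ‖((1 : Vec n →L[ℝ] Vec n) - projCLM (eigSpan D Mlow)).comp (projCLM V)‖ * ‖σ‖ * ‖q‖ := by
  set T := Matrix.toEuclideanLin D
  set L := eigSpan D Mlow with hL
  set s := Finset.univ.filter (fun ℓ => |lam ℓ| < Mlow) with hs
  set K := ((1 : Vec n →L[ℝ] Vec n) - projCLM L).comp (projCLM V) with hK
  have hperp : ∀ ℓ ∈ s, u ℓ ∈ Lᗮ := by
    intro ℓ hℓ
    rw [Finset.mem_filter] at hℓ
    rw [Submodule.mem_orthogonal]
    intro v hv
    have hle : L ≤ (ℝ ∙ (u ℓ))ᗮ := by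
      rw [hL]
      refine iSup₂_le fun μ hμ => ?_
      intro w hw
      rw [Module.End.mem_eigenspace_iff] at hw
      rw [Submodule.mem_orthogonal_singleton_iff_inner_right]
      have h1 : (inner ℝ w (T (u ℓ)) : ℝ) = lam ℓ * inner ℝ w (u ℓ) := by
        rw [heig]; simp [inner_smul_right]
      have h2 : (inner ℝ w (T (u ℓ)) : ℝ) = μ * inner ℝ w (u ℓ) := by
        rw [← hsym w (u ℓ), hw]; simp [inner_smul_left]
      have hne : μ ≠ lam ℓ := fun h => absurd hμ (not_le.2 (h ▸ hℓ.2))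
      have h3 : (μ - lam ℓ) * inner ℝ w (u ℓ) = 0 := by
        have := h1.symm.trans h2; ring_nf; ring_nf at this ⊢; linarith [this]
      rcases mul_eq_zero.1 h3 with h | h
      · exact absurd (sub_eq_zero.1 h) hne
      · rw [real_inner_comm] at h; exact h
    have h4 := hle hv
    rw [Submodule.mem_orthogonal_singleton_iff_inner_right] at h4
    rw [real_inner_comm]; exact h4
  set y : Vec n := ∑ ℓ ∈ s, (c ℓ * (inner ℝ (u ℓ) q : ℝ)) • u ℓ with hy
  have hPV : projCLM V σ = σ := by
    simp only [projCLM, ContinuousLinearMap.comp_apply, Submodule.subtypeL_apply]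
    exact (Submodule.starProjection_eq_self_iff (K := V)).2 hσ
  have hKσ : K σ = σ - (L.orthogonalProjectionOnto σ : Vec n) := by
    rw [hK, ContinuousLinearMap.comp_apply, hPV]
    simp [projCLM, ContinuousLinearMap.sub_apply]
  have hinner : ∀ ℓ ∈ s, (inner ℝ (u ℓ) (K σ) : ℝ) = inner ℝ (u ℓ) σ := by
    intro ℓ hℓ
    rw [hKσ, inner_sub_right]
    have h0 : (inner ℝ (u ℓ) ((L.orthogonalProjectionOnto σ : Vec n)) : ℝ) = 0 := by
      have := (hperp ℓ hℓ) (L.orthogonalProjectionOnto σ : Vec n) (L.orthogonalProjectionOnto σ).2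
      rw [real_inner_comm]; exact this
    rw [h0, sub_zero]
  have hsum : (inner ℝ y (K σ) : ℝ) =
      ∑ ℓ ∈ s, c ℓ * ((inner ℝ (u ℓ) q : ℝ) * (inner ℝ (u ℓ) σ : ℝ)) := by
    rw [hy, sum_inner]
    refine Finset.sum_congr rfl fun ℓ hℓ => ?_
    rw [real_inner_smul_left, hinner ℓ hℓ]; ring
  have hynorm : ‖y‖ ≤ ‖q‖ := by
    have h1 : (inner ℝ y y : ℝ) = ∑ ℓ ∈ s, (c ℓ * (inner ℝ (u ℓ) q : ℝ)) * (c ℓ * (inner ℝ (u ℓ) q : ℝ)) := by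
      rw [hy]
      simpa using hu.inner_sum (fun ℓ => c ℓ * (inner ℝ (u ℓ) q : ℝ))
        (fun ℓ => c ℓ * (inner ℝ (u ℓ) q : ℝ)) s
    have h2 : ‖y‖ ^ 2 ≤ ‖q‖ ^ 2 := by
      rw [← real_inner_self_eq_norm_sq, h1]
      calc ∑ ℓ ∈ s, (c ℓ * (inner ℝ (u ℓ) q : ℝ)) * (c ℓ * (inner ℝ (u ℓ) q : ℝ))
          ≤ ∑ ℓ ∈ s, ‖(inner ℝ (u ℓ) q : ℝ)‖ ^ 2 := by
            refine Finset.sum_le_sum fun ℓ _ => ?_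
            have hcsq : c ℓ * c ℓ ≤ 1 := mul_le_one₀ (hc1 ℓ) (hc0 ℓ) (hc1 ℓ)
            have : (c ℓ * (inner ℝ (u ℓ) q : ℝ)) * (c ℓ * (inner ℝ (u ℓ) q : ℝ))
                = (c ℓ * c ℓ) * ((inner ℝ (u ℓ) q : ℝ) * (inner ℝ (u ℓ) q : ℝ)) := by ring
            rw [this, Real.norm_eq_abs, sq_abs, sq]
            exact mul_le_of_le_one_left (mul_self_nonneg _) hcsq
        _ ≤ ‖q‖ ^ 2 := hu.sum_inner_products_le q
    exact le_of_sq_le_sq h2 (norm_nonneg q)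
  calc |∑ ℓ ∈ s, c ℓ * ((inner ℝ (u ℓ) q : ℝ) * (inner ℝ (u ℓ) σ : ℝ))|
      = |(inner ℝ y (K σ) : ℝ)| := by rw [hsum]
    _ ≤ ‖y‖ * ‖K σ‖ := abs_real_inner_le_norm _ _
    _ ≤ ‖q‖ * (‖K‖ * ‖σ‖) := mul_le_mul hynorm (K.le_opNorm σ) (norm_nonneg _) (norm_nonneg _)
    _ = ‖K‖ * ‖σ‖ * ‖q‖ := by ring

/-- bounds on the remainder parts (over eigenvalues of absolute value
smaller than M) of the expenditure and total-surplus spectral decompositions, for an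
intervention lying in a subspace V. -/
theorem stmt11 (n : ℕ) (hn : 1 ≤ n) (D : Matrix (Fin n) (Fin n) ℝ) (hD : IsSlutsky D)
    (u : Fin n → Vec n) (lam : Fin n → ℝ)
    (hu : Orthonormal ℝ u)
    (hspan : Submodule.span ℝ (Set.range u) = ⊤)
    (heig : ∀ ℓ, Matrix.toEuclideanLin D (u ℓ) = lam ℓ • u ℓ)
    (hneg : ∀ ℓ, lam ℓ ≤ 0)
    (q : Vec n) (Mlow : ℝ) (hM : 0 < Mlow)
    (V : Submodule ℝ (Vec n)) (σ : Vec n) (hσ : σ ∈ V) :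
    |∑ ℓ ∈ Finset.univ.filter (fun ℓ => |lam ℓ| < Mlow),
        (inner ℝ (u ℓ) q : ℝ) * (inner ℝ (u ℓ) σ : ℝ)| ≤
      ‖((1 : Vec n →L[ℝ] Vec n) - projCLM (eigSpan D Mlow)).comp (projCLM V)‖ * ‖σ‖ * ‖q‖ ∧
    |∑ ℓ ∈ Finset.univ.filter (fun ℓ => |lam ℓ| < Mlow),
        (|lam ℓ| / (1 + |lam ℓ|)) * ((inner ℝ (u ℓ) q : ℝ) * (inner ℝ (u ℓ) σ : ℝ))| ≤
      ‖((1 : Vec n →L[ℝ] Vec n) - projCLM (eigSpan D Mlow)).comp (projCLM V)‖ * ‖σ‖ * ‖q‖ := by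
  have hherm : D.IsHermitian := by
    rw [Matrix.IsHermitian, Matrix.conjTranspose_eq_transpose_of_trivial]; exact hD.1
  have hsym : (Matrix.toEuclideanLin D).IsSymmetric := Matrix.isHermitian_iff_isSymmetric.1 hherm
  constructor
  · simpa only [one_mul] using stmt11_key D hsym u lam hu heig q Mlow V σ hσ (fun _ => 1)
      (fun _ => zero_le_one) (fun _ => le_refl 1)
  · refine stmt11_key D hsym u lam hu heig q Mlow V σ hσ
      (fun ℓ => |lam ℓ| / (1 + |lam ℓ|)) (fun ℓ => ?_) (fun ℓ => ?_)
    · positivity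
    · rw [div_le_one (by positivity)]; linarith [abs_nonneg (lam ℓ)]
end
end

section
/- Let n ≥ 2 and D* = −(n/(n−1))·I + (1/(n−1))·𝟙𝟙ᵀ, where 𝟙 is the all-ones vector. Then: (a) D* is a normalized Slutsky matrix (symmetric, negative semidefinite, all diagonal entries −1), with eigenvalue 0 on span(𝟙) and eigenvalue −n/(n−1) on the orthogonal complement of 𝟙; and (b) for every intervention σ ∈ ℝⁿ there exists a unit vector r orthogonal to 𝟙 such that the market state (D*, q⁰) with q⁰ = (1/n)·(𝟙 + (1/2)·r) satisfies ‖q⁰‖ ≤ 1 and has total surplus derivative Ẇ ≤ 0. -/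
noncomputable section
open Matrix MeasureTheory Filter

variable {n : ℕ}

/-- The all-ones vector. -/
def onesV (n : ℕ) : Vec n := WithLp.toLp 2 (fun _ => (1 : ℝ))

/-! ### Auxiliary lemmas -/

lemma aux_inner_onesV_left {n : ℕ} (v : Vec n) : (inner ℝ (onesV n) v : ℝ) = ∑ i, v i := by
  simp [PiLp.inner_apply, onesV]

lemma aux_act {n : ℕ} (c d : ℝ) (v : Vec n) :
    Matrix.toEuclideanLin (c • (1 : Matrix (Fin n) (Fin n) ℝ) + d • Matrix.of (fun _ _ => (1:ℝ))) v
      = c • v + (d * (inner ℝ (onesV n) v : ℝ)) • onesV n := by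
  rw [aux_inner_onesV_left]
  ext i
  simp [Matrix.toEuclideanLin_apply, Matrix.mulVec, dotProduct, Matrix.one_apply, onesV,
    mul_add, add_mul, Finset.sum_add_distrib, Finset.mul_sum, ite_mul]

lemma aux_inner_ones_ones {n : ℕ} : (inner ℝ (onesV n) (onesV n) : ℝ) = n := by
  rw [aux_inner_onesV_left]; simp [onesV]

lemma aux_prod {n : ℕ} (γ δ α β : ℝ)
    (h1 : γ * α = 1) (h2 : γ * β + δ * α + δ * (β * n) = 0) :
    (γ • (1:Matrix (Fin n) (Fin n) ℝ) + δ • Matrix.of (fun _ _ => (1:ℝ))) *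
    (α • (1:Matrix (Fin n) (Fin n) ℝ) + β • Matrix.of (fun _ _ => (1:ℝ))) = 1 := by
  have hJJ : (Matrix.of (fun _ _ => (1:ℝ)) : Matrix (Fin n) (Fin n) ℝ) * Matrix.of (fun _ _ => (1:ℝ))
      = (n:ℝ) • Matrix.of (fun _ _ => (1:ℝ)) := by
    ext i j; simp [Matrix.mul_apply]
  simp only [Matrix.add_mul, Matrix.mul_add, Matrix.smul_mul, Matrix.mul_smul,
    Matrix.one_mul, Matrix.mul_one, hJJ, smul_smul]
  match_scalars
  · linarith [mul_comm α γ]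
  · linarith [mul_comm α δ, mul_comm β γ]

lemma aux_dot {n : ℕ} (x : Fin n → ℝ) (c d : ℝ) :
    dotProduct x ((c • (1:Matrix (Fin n) (Fin n) ℝ) +
        d • Matrix.of (fun _ _ => (1:ℝ))) *ᵥ x)
        = c * (∑ i, x i ^2) + d * (∑ i, x i)^2 := by
  simp only [dotProduct, Matrix.mulVec, Matrix.add_apply, Matrix.smul_apply,
    Matrix.one_apply, Matrix.of_apply, smul_eq_mul, mul_ite, mul_one, mul_zero,
    add_mul, ite_mul, zero_mul, Finset.sum_add_distrib, Finset.sum_ite_eq,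
    Finset.mem_univ, if_true, mul_add]
  rw [sq (∑ i, x i), Finset.sum_mul]
  simp only [Finset.mul_sum]
  congr 1
  · apply Finset.sum_congr rfl; intro i _; ring
  · apply Finset.sum_congr rfl; intro i _
    apply Finset.sum_congr rfl; intro j _; ring

lemma aux_norm {n : ℕ} (hn : 2 ≤ n) (r : Vec n) (hrnorm : ‖r‖ = 1)
    (hru : (inner ℝ r (onesV n) : ℝ) = 0) :
    ‖((n : ℝ)⁻¹ • (onesV n + (1 / 2 : ℝ) • r) : Vec n)‖ ≤ 1 := by
  have hn2 : (2:ℝ) ≤ (n:ℝ) := by exact_mod_cast hn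
  have hur : (inner ℝ (onesV n) r : ℝ) = 0 := by rw [real_inner_comm]; exact hru
  have hrr : (inner ℝ r r : ℝ) = 1 := by
    have h := real_inner_self_eq_norm_sq r
    rw [hrnorm] at h; simpa using h
  set q : Vec n := (n : ℝ)⁻¹ • (onesV n + (1 / 2 : ℝ) • r) with hq
  have hqq : (inner ℝ q q : ℝ) = ((n:ℝ)⁻¹)^2 * ((n:ℝ) + 1/4) := by
    rw [hq]
    simp only [real_inner_smul_left, real_inner_smul_right, inner_add_left, inner_add_right,
      aux_inner_ones_ones, hur, hru, hrr]
    ring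
  have h := real_inner_self_eq_norm_sq q
  rw [hqq] at h
  have hinv2 : ((n:ℝ)⁻¹)^2 * ((n:ℝ) + 1/4) ≤ 1 := by
    rw [inv_pow, inv_mul_le_iff₀ (by positivity)]
    nlinarith
  nlinarith [norm_nonneg q]

lemma aux_W {n : ℕ} (hn : 2 ≤ n) (Dstar : Matrix (Fin n) (Fin n) ℝ)
    (hDstar : Dstar = (-((n : ℝ) / ((n : ℝ) - 1))) • (1 : Matrix (Fin n) (Fin n) ℝ) +
      (((n : ℝ) - 1)⁻¹) • Matrix.of (fun _ _ => (1 : ℝ)))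
    (hinv : ((1:Matrix (Fin n) (Fin n) ℝ) - Dstar)⁻¹ =
      (((n:ℝ)-1)/(2*(n:ℝ)-1)) • (1:Matrix (Fin n) (Fin n) ℝ) +
      ((2*(n:ℝ)-1)⁻¹) • Matrix.of (fun _ _ => (1:ℝ)))
    (r σ : Vec n) (hru : (inner ℝ r (onesV n) : ℝ) = 0) (hrr : (inner ℝ r r : ℝ) = 1) :
    WDot Dstar ((n : ℝ)⁻¹ • (onesV n + (1 / 2 : ℝ) • r)) σ
      = (inner ℝ r σ : ℝ) / (2*(2*(n:ℝ)-1)) := by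
  have hn2 : (2:ℝ) ≤ (n:ℝ) := by exact_mod_cast hn
  have hN1' : (n:ℝ) - 1 ≠ 0 := by nlinarith
  have hN2' : 2*(n:ℝ) - 1 ≠ 0 := by nlinarith
  have hNne : (n:ℝ) ≠ 0 := by nlinarith
  have hur : (inner ℝ (onesV n) r : ℝ) = 0 := by rw [real_inner_comm]; exact hru
  have hDact : ∀ v : Vec n, Matrix.toEuclideanLin Dstar v
      = (-((n : ℝ) / ((n : ℝ) - 1))) • v
        + ((((n:ℝ)-1)⁻¹) * (inner ℝ (onesV n) v : ℝ)) • onesV n := by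
    intro v; rw [hDstar, aux_act]
  set u := onesV n with hu
  set t : ℝ := inner ℝ u σ with ht
  set w : ℝ := inner ℝ r σ with hwdef
  have hσu : (inner ℝ σ u : ℝ) = t := by rw [ht, real_inner_comm]
  have hσr : (inner ℝ σ r : ℝ) = w := by rw [hwdef, real_inner_comm]
  have hp : pDot Dstar σ = -((((n:ℝ)-1)/(2*(n:ℝ)-1)) • σ + ((2*(n:ℝ)-1)⁻¹ * t) • u) := by
    rw [pDot, hinv, aux_act]
  have hup : (inner ℝ u (pDot Dstar σ) : ℝ)
      = -((((n:ℝ)-1)/(2*(n:ℝ)-1)) * t + (2*(n:ℝ)-1)⁻¹ * t * (n:ℝ)) := by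
    rw [hp]
    simp only [inner_neg_right, inner_add_right, real_inner_smul_right, hu,
      aux_inner_ones_ones, ← ht, show inner ℝ (onesV n) σ = t from ht.symm]
  have hqd : qDot Dstar σ =
      (-((n : ℝ) / ((n : ℝ) - 1))) • pDot Dstar σ
      + ((((n:ℝ)-1)⁻¹) * (-((((n:ℝ)-1)/(2*(n:ℝ)-1)) * t + (2*(n:ℝ)-1)⁻¹ * t * (n:ℝ)))) • u := by
    rw [qDot, hDact, hup]
  rw [WDot, CDot, PDot, SDot, hqd, hp]
  simp only [inner_neg_right, inner_add_right, inner_add_left, real_inner_smul_right,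
    real_inner_smul_left, hu, aux_inner_ones_ones, hur, hru, hrr, hσu, hσr, ← ht, ← hwdef,
    show inner ℝ (onesV n) σ = t from ht.symm, show inner ℝ σ (onesV n) = t from hσu,
    show inner ℝ r (onesV n) = 0 from hru]
  field_simp
  have hN2'' : (-1 + (n:ℝ) * 2) ≠ 0 := by intro h; apply hN2'; linarith
  ring_nf
  field_simp
  ring

/-- for D* = -(n/(n-1)) I + (1/(n-1)) 11^T: (a) D* is a normalized
Slutsky matrix with eigenvalue 0 on span(1) and eigenvalue -n/(n-1) on the orthogonal
complement of 1; (b) for every intervention there is a unit vector r orthogonal to 1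
such that the market state with q0 = (1/n)(1 + r/2) has Wdot ≤ 0. -/
theorem stmt14 (n : ℕ) (hn : 2 ≤ n)
    (Dstar : Matrix (Fin n) (Fin n) ℝ)
    (hDstar : Dstar = (-((n : ℝ) / ((n : ℝ) - 1))) • (1 : Matrix (Fin n) (Fin n) ℝ) +
      (((n : ℝ) - 1)⁻¹) • Matrix.of (fun _ _ => (1 : ℝ))) :
    (IsSlutsky Dstar ∧
      Matrix.toEuclideanLin Dstar (onesV n) = 0 ∧
      (∀ v : Vec n, (inner ℝ (onesV n) v : ℝ) = 0 →
        Matrix.toEuclideanLin Dstar v = (-((n : ℝ) / ((n : ℝ) - 1))) • v)) ∧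
    ∀ σ : Vec n, ∃ r : Vec n, ‖r‖ = 1 ∧ (inner ℝ r (onesV n) : ℝ) = 0 ∧
      ‖((n : ℝ)⁻¹ • (onesV n + (1 / 2 : ℝ) • r) : Vec n)‖ ≤ 1 ∧
      WDot Dstar ((n : ℝ)⁻¹ • (onesV n + (1 / 2 : ℝ) • r)) σ ≤ 0 := by
  have hn2 : (2:ℝ) ≤ (n:ℝ) := by exact_mod_cast hn
  have hN1 : (0:ℝ) < (n:ℝ) - 1 := by linarith
  have hN1' : (n:ℝ) - 1 ≠ 0 := ne_of_gt hN1
  have hN2' : 2*(n:ℝ) - 1 ≠ 0 := by nlinarith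
  have hNne : (n:ℝ) ≠ 0 := by nlinarith
  have hDact : ∀ v : Vec n, Matrix.toEuclideanLin Dstar v
      = (-((n : ℝ) / ((n : ℝ) - 1))) • v
        + ((((n:ℝ)-1)⁻¹) * (inner ℝ (onesV n) v : ℝ)) • onesV n := by
    intro v; rw [hDstar, aux_act]
  have hones : Matrix.toEuclideanLin Dstar (onesV n) = 0 := by
    rw [hDact, aux_inner_ones_ones]
    have : (-((n : ℝ) / ((n : ℝ) - 1))) = -((((n:ℝ)-1)⁻¹) * (n:ℝ)) := by
      field_simp
    rw [this, neg_smul, neg_add_eq_zero]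
  have hA : (1:Matrix (Fin n) (Fin n) ℝ) - Dstar =
      ((2*(n:ℝ)-1)/((n:ℝ)-1)) • (1:Matrix (Fin n) (Fin n) ℝ) +
      (-(((n:ℝ)-1)⁻¹)) • Matrix.of (fun _ _ => (1:ℝ)) := by
    rw [hDstar]
    match_scalars
    · field_simp; ring
    · ring
  have hinv : ((1:Matrix (Fin n) (Fin n) ℝ) - Dstar)⁻¹ =
      (((n:ℝ)-1)/(2*(n:ℝ)-1)) • (1:Matrix (Fin n) (Fin n) ℝ) +
      ((2*(n:ℝ)-1)⁻¹) • Matrix.of (fun _ _ => (1:ℝ)) := by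
    rw [hA]
    apply Matrix.inv_eq_right_inv
    apply aux_prod
    · field_simp
    · field_simp; ring
  refine ⟨⟨⟨?_, ?_, ?_⟩, hones, ?_⟩, ?_⟩
  · -- symmetric
    rw [hDstar]; ext i j
    simp [Matrix.transpose_apply, Matrix.one_apply, eq_comm]
  · -- PSD of -Dstar
    refine Matrix.posSemidef_iff_dotProduct_mulVec.mpr ⟨?_, ?_⟩
    · rw [hDstar]; ext i j
      simp [Matrix.conjTranspose_apply, Matrix.one_apply, eq_comm]
    · intro x
      have key : ((∑ i, x i)^2 : ℝ) ≤ (n:ℝ) * ∑ i, x i ^ 2 := by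
        simpa using sq_sum_le_card_mul_sum_sq (s := Finset.univ) (f := x)
      rw [hDstar]
      simp only [star_trivial, neg_add, ← neg_smul, neg_neg]
      rw [aux_dot]
      have h2 := inv_pos.mpr hN1
      rw [div_eq_mul_inv]
      nlinarith [Finset.sum_nonneg (fun i (_ : i ∈ Finset.univ) => sq_nonneg (x i))]
  · -- diagonal
    intro i; rw [hDstar]
    simp only [Matrix.add_apply, Matrix.smul_apply, Matrix.one_apply_eq, Matrix.of_apply,
      smul_eq_mul, mul_one]
    field_simp
    ring
  · -- eigenvalue on orthogonal complement
    intro v hv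
    rw [hDact, hv, mul_zero, zero_smul, add_zero]
  · -- part (b)
    intro σ
    set i0 : Fin n := ⟨0, by omega⟩ with hi0
    set i1 : Fin n := ⟨1, by omega⟩ with hi1
    have hne : i0 ≠ i1 := by simp [hi0, hi1, Fin.ext_iff]
    set r1 : Vec n := (Real.sqrt 2)⁻¹ •
      ((EuclideanSpace.single i0 (1:ℝ)) - EuclideanSpace.single i1 (1:ℝ)) with hr1
    have hs2 : Real.sqrt 2 ≠ 0 := by positivity
    have hr1r1 : (inner ℝ r1 r1 : ℝ) = 1 := by
      rw [hr1]
      simp only [real_inner_smul_left, real_inner_smul_right, inner_sub_left, inner_sub_right,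
        EuclideanSpace.inner_single_left, EuclideanSpace.single_apply, star_trivial, if_pos rfl,
        hne, Ne.symm hne, if_false, mul_one, mul_zero, sub_zero, zero_sub, if_neg hne]
      have h2 : (Real.sqrt 2) * Real.sqrt 2 = 2 := Real.mul_self_sqrt (by norm_num)
      field_simp
      norm_num [Real.sq_sqrt]
    have hr1u : (inner ℝ r1 (onesV n) : ℝ) = 0 := by
      have h0 : onesV n i0 = 1 := rfl
      have h1 : onesV n i1 = 1 := rfl
      rw [hr1]
      simp only [real_inner_smul_left, inner_sub_left, EuclideanSpace.inner_single_left,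
        star_trivial, h0, h1]
      ring
    have hr1norm : ‖r1‖ = 1 := by
      have h := real_inner_self_eq_norm_sq r1
      rw [hr1r1] at h
      nlinarith [norm_nonneg r1]
    set r : Vec n := if 0 ≤ (inner ℝ r1 σ : ℝ) then -r1 else r1 with hrdef
    have hrnorm : ‖r‖ = 1 := by
      rw [hrdef]; split <;> simp [hr1norm]
    have hru : (inner ℝ r (onesV n) : ℝ) = 0 := by
      rw [hrdef]; split <;> simp [hr1u]
    have hw : (inner ℝ r σ : ℝ) ≤ 0 := by
      rw [hrdef]; split
      · rename_i h; simpa using neg_nonpos.mpr h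
      · rename_i h; linarith [not_le.mp h]
    have hrr : (inner ℝ r r : ℝ) = 1 := by
      have h := real_inner_self_eq_norm_sq r
      rw [hrnorm] at h; simpa using h
    refine ⟨r, hrnorm, hru, aux_norm hn r hrnorm hru, ?_⟩
    rw [aux_W hn Dstar hDstar hinv r σ hru hrr]
    apply div_nonpos_of_nonpos_of_nonneg hw
    linarith
end
end

section
/- Let n ≥ 2, u¹ = n^{−1/2}·𝟙, D* = −(n/2)·u¹(u¹)ᵀ − (1/2)·I, let (u²,…,uⁿ) be an orthonormal basis of the orthogonal complement of u¹, let 0 < f ≤ (n−1)^{−1/2}, and let s₂,…,sₙ be independent random variables each uniform on {−1, +1}. Consider the random market state (D*, q⁰) with q⁰ = (1/2)·(u¹ + f·Σ_{ℓ=2}^n s_ℓ u^ℓ). Then for every fixed intervention σ ∈ ℝⁿ, the consumer surplus derivative satisfies Pr( Ċ > ‖σ‖/(n+3) ) ≤ 1/2; in particular, no fixed intervention achieves Ċ > ‖σ‖/(n+3) with probability greater than 1/2 over this family of market states. -/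
noncomputable section
open Matrix MeasureTheory Filter

variable {n : ℕ}

section SignHelpers
open ProbabilityTheory
open scoped ENNReal

def sgn (b : Bool) : ℝ := if b then 1 else -1

lemma sgn_not (b : Bool) : sgn (!b) = - sgn b := by cases b <;> simp [sgn]

lemma sgn_inj : Function.Injective sgn := by
  intro a b h; cases a <;> cases b <;> simp [sgn] at h ⊢ <;> norm_num at h

lemma signSum_bound {n : ℕ} (i0 : Fin n)
    (Ω : Type) [MeasurableSpace Ω] (μ : Measure Ω) [IsProbabilityMeasure μ]
    (s : Fin n → Ω → ℝ)
    (hmeas : ∀ ℓ, Measurable (s ℓ))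
    (hsign : ∀ ℓ, ℓ ≠ i0 → ∀ ω, s ℓ ω = 1 ∨ s ℓ ω = -1)
    (huni : ∀ ℓ, ℓ ≠ i0 → μ {ω | s ℓ ω = 1} = 1 / 2 ∧ μ {ω | s ℓ ω = -1} = 1 / 2)
    (hindep : iIndepFun (fun ℓ : {ℓ : Fin n // ℓ ≠ i0} => s ℓ) μ)
    (c : Fin n → ℝ) (t : ℝ) (ht : 0 ≤ t) :
    μ {ω | t < ∑ ℓ ∈ Finset.univ.filter (fun ℓ => ℓ ≠ i0), c ℓ * s ℓ ω} ≤ 1 / 2 := by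
  classical
  set T := {ℓ : Fin n // ℓ ≠ i0} with hT
  have hsum : ∀ ω, ∑ ℓ ∈ Finset.univ.filter (fun ℓ => ℓ ≠ i0), c ℓ * s ℓ ω
      = ∑ ℓ : T, c ℓ.1 * s ℓ.1 ω := by
    intro ω
    exact Finset.sum_subtype _ (by intro x; simp) (fun ℓ => c ℓ * s ℓ ω)
  -- atoms
  set A : (T → Bool) → Set Ω := fun ε => ⋂ ℓ : T, s ℓ.1 ⁻¹' {sgn (ε ℓ)} with hA
  have hAmeas : ∀ ε, MeasurableSet (A ε) := fun ε =>
    MeasurableSet.iInter fun ℓ => (hmeas ℓ.1) (measurableSet_singleton _)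
  have hμA : ∀ ε, μ (A ε) = (2 : ℝ≥0∞)⁻¹ ^ (Fintype.card T) := by
    intro ε
    have h := hindep.measure_inter_preimage_eq_mul Finset.univ
      (sets := fun ℓ => {sgn (ε ℓ)}) (fun _ _ => measurableSet_singleton _)
    have hAe : A ε = ⋂ ℓ ∈ Finset.univ, s ℓ.1 ⁻¹' {sgn (ε ℓ)} := by
      simp [hA]
    rw [hAe, h]
    have hone : ∀ ℓ : T, μ (s ℓ.1 ⁻¹' {sgn (ε ℓ)}) = (2 : ℝ≥0∞)⁻¹ := by
      intro ℓ
      have h1 := (huni ℓ.1 ℓ.2).1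
      have h2 := (huni ℓ.1 ℓ.2).2
      have e1 : s ℓ.1 ⁻¹' {(1:ℝ)} = {ω | s ℓ.1 ω = 1} := rfl
      have e2 : s ℓ.1 ⁻¹' {(-1:ℝ)} = {ω | s ℓ.1 ω = -1} := rfl
      cases hb : ε ℓ
      · simp only [sgn, hb, Bool.false_eq_true, if_false, e2, h2, one_div]
      · simp only [sgn, hb, if_true, e1, h1, one_div]
    rw [Finset.prod_congr rfl (fun ℓ _ => hone ℓ), Finset.prod_const, Finset.card_univ]
  -- the value of the sum on an atom
  set g : (T → Bool) → ℝ := fun ε => ∑ ℓ : T, c ℓ.1 * sgn (ε ℓ) with hg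
  have hval : ∀ ε ω, ω ∈ A ε → ∑ ℓ : T, c ℓ.1 * s ℓ.1 ω = g ε := by
    intro ε ω hω
    refine Finset.sum_congr rfl fun ℓ _ => ?_
    have := Set.mem_iInter.1 hω ℓ
    simp only [Set.mem_preimage, Set.mem_singleton_iff] at this
    rw [this]
  -- the event is a union of atoms
  set F : Finset (T → Bool) := Finset.univ.filter (fun ε => t < g ε) with hF
  have hE : {ω | t < ∑ ℓ ∈ Finset.univ.filter (fun ℓ => ℓ ≠ i0), c ℓ * s ℓ ω}
      = ⋃ ε ∈ F, A ε := by
    ext ω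
    simp only [Set.mem_setOf_eq, Set.mem_iUnion, hF, Finset.mem_filter, Finset.mem_univ,
      true_and, exists_prop]
    constructor
    · intro hω
      set ε : T → Bool := fun ℓ => decide (s ℓ.1 ω = 1) with hε
      have hmem : ω ∈ A ε := by
        refine Set.mem_iInter.2 fun ℓ => ?_
        simp only [Set.mem_preimage, Set.mem_singleton_iff]
        rcases hsign ℓ.1 ℓ.2 ω with h | h <;> simp [hε, sgn, h] <;> norm_num
      refine ⟨ε, ?_, hmem⟩
      rw [← hval ε ω hmem, ← hsum]; exact hω
    · rintro ⟨ε, hεF, hmem⟩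
      rw [hsum, hval ε ω hmem]; exact hεF
  -- compute the measure
  have hdisj : (F : Set (T → Bool)).PairwiseDisjoint A := by
    intro ε _ ε' _ hne
    refine Set.disjoint_left.2 fun ω hω hω' => hne ?_
    funext ℓ
    have h1 := Set.mem_iInter.1 hω ℓ
    have h2 := Set.mem_iInter.1 hω' ℓ
    simp only [Set.mem_preimage, Set.mem_singleton_iff] at h1 h2
    exact sgn_inj (h1 ▸ h2 ▸ rfl)
  have hμE : μ {ω | t < ∑ ℓ ∈ Finset.univ.filter (fun ℓ => ℓ ≠ i0), c ℓ * s ℓ ω}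
      = F.card * (2 : ℝ≥0∞)⁻¹ ^ (Fintype.card T) := by
    rw [hE, measure_biUnion_finset hdisj (fun ε _ => hAmeas ε)]
    rw [Finset.sum_congr rfl (fun ε _ => hμA ε), Finset.sum_const, nsmul_eq_mul]
  -- counting: negation maps F into its complement
  have hcount : 2 * F.card ≤ 2 ^ (Fintype.card T) := by
    set neg : (T → Bool) → (T → Bool) := fun ε ℓ => !ε ℓ with hneg
    have hmapsto : ∀ ε ∈ F, neg ε ∈ Finset.univ \ F := by
      intro ε hε
      have hgε : t < g ε := by simpa [hF] using hε
      have hnegg : g (neg ε) = - g ε := by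
        simp only [hg, hneg, ← Finset.sum_neg_distrib]
        exact Finset.sum_congr rfl fun ℓ _ => by rw [sgn_not]; ring
      simp only [hF, Finset.mem_sdiff, Finset.mem_univ, Finset.mem_filter, true_and, not_lt]
      rw [hnegg]; linarith
    have hinj : Set.InjOn neg F := by
      intro ε _ ε' _ h
      funext ℓ
      have := congrFun h ℓ
      simpa [hneg] using this
    have hle : F.card ≤ (Finset.univ \ F).card :=
      Finset.card_le_card_of_injOn _ hmapsto hinj
    have hsplit : (Finset.univ \ F).card + F.card = 2 ^ (Fintype.card T) := by
      rw [Finset.card_sdiff_add_card_eq_card (Finset.subset_univ F), Finset.card_univ,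
        Fintype.card_fun, Fintype.card_bool]
    omega
  -- conclude
  rw [hμE]
  have h2 : (2 : ℝ≥0∞) * (F.card * (2 : ℝ≥0∞)⁻¹ ^ (Fintype.card T)) ≤ 1 := by
    calc (2 : ℝ≥0∞) * (F.card * (2 : ℝ≥0∞)⁻¹ ^ (Fintype.card T))
        = ((2 * F.card : ℕ) : ℝ≥0∞) * (2 : ℝ≥0∞)⁻¹ ^ (Fintype.card T) := by
          push_cast; ring
      _ ≤ ((2 ^ Fintype.card T : ℕ) : ℝ≥0∞) * (2 : ℝ≥0∞)⁻¹ ^ (Fintype.card T) := by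
          exact mul_le_mul_left (by exact_mod_cast hcount) _
      _ = 1 := by
          push_cast
          rw [← mul_pow]
          rw [ENNReal.mul_inv_cancel (by norm_num) (by norm_num)]
          simp
  calc F.card * (2 : ℝ≥0∞)⁻¹ ^ (Fintype.card T)
      = (2 : ℝ≥0∞)⁻¹ * (2 * (F.card * (2 : ℝ≥0∞)⁻¹ ^ (Fintype.card T))) := by
        rw [← mul_assoc, ENNReal.inv_mul_cancel (by norm_num) (by norm_num), one_mul]
    _ ≤ (2 : ℝ≥0∞)⁻¹ * 1 := by gcongr
    _ = 1 / 2 := by rw [mul_one, one_div]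

end SignHelpers

/-- with q0 built from i.i.d. uniform signs on the orthogonal complement
of u1, no fixed intervention makes the consumer surplus derivative exceed
norm(sigma)/(n+3) with probability greater than 1/2. -/
theorem stmt16 (n : ℕ) (hn : 2 ≤ n) (i0 : Fin n) (hi0 : (i0 : ℕ) = 0)
    (u1 : Vec n) (hu1 : u1 = (Real.sqrt n)⁻¹ • onesV n)
    (Dstar : Matrix (Fin n) (Fin n) ℝ)
    (hDstar : Dstar = (-((n : ℝ) / 2)) • Matrix.of (fun i j => u1 i * u1 j) -
      (1 / 2 : ℝ) • (1 : Matrix (Fin n) (Fin n) ℝ))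
    (u : Fin n → Vec n) (hu : Orthonormal ℝ u) (hu0 : u i0 = u1)
    (f : ℝ) (hf0 : 0 < f) (hf1 : f ≤ (Real.sqrt ((n : ℝ) - 1))⁻¹)
    (Ω : Type) [MeasurableSpace Ω] (μ : Measure Ω) [IsProbabilityMeasure μ]
    (s : Fin n → Ω → ℝ)
    (hmeas : ∀ ℓ, Measurable (s ℓ))
    (hsign : ∀ ℓ, ℓ ≠ i0 → ∀ ω, s ℓ ω = 1 ∨ s ℓ ω = -1)
    (huni : ∀ ℓ, ℓ ≠ i0 →
      μ {ω | s ℓ ω = 1} = 1 / 2 ∧ μ {ω | s ℓ ω = -1} = 1 / 2)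
    (hindep : ProbabilityTheory.iIndepFun
      (fun ℓ : {ℓ : Fin n // ℓ ≠ i0} => s ℓ) μ) :
    ∀ σ : Vec n,
      μ {ω | ‖σ‖ / ((n : ℝ) + 3) <
        CDot Dstar
          ((1 / 2 : ℝ) •
            (u1 + f • ∑ ℓ ∈ Finset.univ.filter (fun ℓ => ℓ ≠ i0), s ℓ ω • u ℓ))
          σ} ≤ 1 / 2 := by
  
  intro σ
  set P : Matrix (Fin n) (Fin n) ℝ := Matrix.of (fun i j => u1 i * u1 j) with hP
  have hn3 : ((n : ℝ) + 3) ≠ 0 := by positivity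
  set a : ℝ := 2 * n / (3 * (n + 3)) with ha
  have hu1norm : ‖u1‖ = 1 := by rw [← hu0]; exact hu.1 i0
  have hu1inner : (inner ℝ u1 u1 : ℝ) = 1 := by
    rw [real_inner_self_eq_norm_mul_norm, hu1norm, mul_one]
  have hsum1 : ∑ k, u1 k * u1 k = 1 := by
    have h := hu1inner
    rw [PiLp.inner_apply] at h
    simpa [RCLike.inner_apply, conj_trivial, ← pow_two] using h
  have hPP : P * P = P := by
    ext i j
    simp only [hP, Matrix.mul_apply, Matrix.of_apply]
    calc ∑ k, (u1 i * u1 k) * (u1 k * u1 j)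
        = (u1 i * u1 j) * ∑ k, u1 k * u1 k := by
          rw [Finset.mul_sum]; exact Finset.sum_congr rfl fun k _ => by ring
      _ = u1 i * u1 j := by rw [hsum1, mul_one]
  have h1D : (1 : Matrix (Fin n) (Fin n) ℝ) - Dstar
      = ((n : ℝ) / 2) • P + (3 / 2 : ℝ) • 1 := by
    rw [hDstar]; module
  have hco : (n : ℝ) / 2 * (2 / 3) - ((n : ℝ) / 2 * a + 3 / 2 * a) = 0 := by
    rw [ha]; field_simp; ring
  have hmul : (((n : ℝ) / 2) • P + (3 / 2 : ℝ) • (1 : Matrix (Fin n) (Fin n) ℝ)) *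
      ((2 / 3 : ℝ) • 1 - a • P) = 1 := by
    have expand : (((n : ℝ) / 2) • P + (3 / 2 : ℝ) • (1 : Matrix (Fin n) (Fin n) ℝ)) *
        ((2 / 3 : ℝ) • 1 - a • P)
        = ((n : ℝ) / 2 * (2 / 3) - ((n : ℝ) / 2 * a + 3 / 2 * a)) • P +
          ((3 / 2 : ℝ) * (2 / 3)) • (1 : Matrix (Fin n) (Fin n) ℝ) := by
      simp only [add_mul, mul_sub, smul_mul_assoc, mul_smul_comm, smul_smul, hPP,
        mul_one, one_mul]
      module
    rw [expand, hco]
    norm_num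
  have hBinv : ((1 : Matrix (Fin n) (Fin n) ℝ) - Dstar)⁻¹
      = (2 / 3 : ℝ) • 1 - a • P :=
    Matrix.inv_eq_right_inv (by rw [h1D]; exact hmul)
  have hPapp : ∀ x : Vec n, Matrix.toEuclideanLin P x = (inner ℝ u1 x : ℝ) • u1 := by
    intro x
    ext i
    simp only [Matrix.toEuclideanLin_apply, hP, Matrix.mulVec, dotProduct,
      Matrix.of_apply, PiLp.toLp_apply, PiLp.smul_apply, smul_eq_mul,
      PiLp.inner_apply, RCLike.inner_apply, conj_trivial]
    rw [Finset.sum_mul]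
    exact Finset.sum_congr rfl fun j _ => by ring
  have hBapp : Matrix.toEuclideanLin ((2 / 3 : ℝ) • 1 - a • P) σ
      = (2 / 3 : ℝ) • σ - (a * (inner ℝ u1 σ : ℝ)) • u1 := by
    have h1 : Matrix.toEuclideanLin (1 : Matrix (Fin n) (Fin n) ℝ) σ = σ := by
      ext i
      simp [Matrix.toEuclideanLin_apply, Matrix.one_mulVec]
    rw [map_sub, _root_.map_smul, _root_.map_smul, LinearMap.sub_apply,
      LinearMap.smul_apply, LinearMap.smul_apply, h1, hPapp, smul_smul]
  set B : Vec n := (2 / 3 : ℝ) • σ - (a * (inner ℝ u1 σ : ℝ)) • u1 with hB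
  have hBu1 : (inner ℝ u1 B : ℝ) = 2 / ((n : ℝ) + 3) * (inner ℝ u1 σ : ℝ) := by
    rw [hB, inner_sub_right, real_inner_smul_right, real_inner_smul_right, hu1inner]
    have hca : (2 / 3 : ℝ) - a = 2 / ((n : ℝ) + 3) := by
      rw [ha]; field_simp; ring
    linear_combination (inner ℝ u1 σ : ℝ) * hca
  have hBu : ∀ ℓ : Fin n, ℓ ≠ i0 → (inner ℝ (u ℓ) B : ℝ) = 2 / 3 * (inner ℝ (u ℓ) σ : ℝ) := by
    intro ℓ hℓ
    have horth : (inner ℝ (u ℓ) u1 : ℝ) = 0 := by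
      rw [← hu0]; exact hu.2 hℓ
    rw [hB, inner_sub_right, real_inner_smul_right, real_inner_smul_right, horth]
    ring
  set c : Fin n → ℝ := fun ℓ => f / 3 * (inner ℝ (u ℓ) σ : ℝ) with hc
  have hCval : ∀ ω : Ω,
      CDot Dstar ((1 / 2 : ℝ) •
        (u1 + f • ∑ ℓ ∈ Finset.univ.filter (fun ℓ => ℓ ≠ i0), s ℓ ω • u ℓ)) σ
      = (inner ℝ u1 σ : ℝ) / ((n : ℝ) + 3) +
        ∑ ℓ ∈ Finset.univ.filter (fun ℓ => ℓ ≠ i0), c ℓ * s ℓ ω := by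
    intro ω
    rw [CDot, pDot, hBinv, inner_neg_right, neg_neg, hBapp]
    rw [real_inner_smul_left, inner_add_left, real_inner_smul_left, sum_inner]
    have hterm : ∀ ℓ ∈ Finset.univ.filter (fun ℓ => ℓ ≠ i0),
        (inner ℝ (s ℓ ω • u ℓ) B : ℝ) = s ℓ ω * (2 / 3 * (inner ℝ (u ℓ) σ : ℝ)) := by
      intro ℓ hℓ
      rw [real_inner_smul_left, hBu ℓ (Finset.mem_filter.1 hℓ).2]
    rw [Finset.sum_congr rfl hterm, hBu1]
    have hsum2 : f * ∑ ℓ ∈ Finset.univ.filter (fun ℓ => ℓ ≠ i0),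
        s ℓ ω * (2 / 3 * (inner ℝ (u ℓ) σ : ℝ))
        = 2 * ∑ ℓ ∈ Finset.univ.filter (fun ℓ => ℓ ≠ i0), c ℓ * s ℓ ω := by
      rw [Finset.mul_sum, Finset.mul_sum]
      exact Finset.sum_congr rfl (fun ℓ _ => by rw [hc]; ring)
    rw [hsum2]
    ring
  set t : ℝ := ‖σ‖ / ((n : ℝ) + 3) - (inner ℝ u1 σ : ℝ) / ((n : ℝ) + 3) with htdef
  have ht : 0 ≤ t := by
    have hcs := real_inner_le_norm u1 σ
    rw [hu1norm, one_mul] at hcs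
    rw [htdef, div_sub_div_same]
    apply div_nonneg (by linarith) (by positivity)
  have hEq : {ω | ‖σ‖ / ((n : ℝ) + 3) <
        CDot Dstar ((1 / 2 : ℝ) •
          (u1 + f • ∑ ℓ ∈ Finset.univ.filter (fun ℓ => ℓ ≠ i0), s ℓ ω • u ℓ)) σ}
      = {ω | t < ∑ ℓ ∈ Finset.univ.filter (fun ℓ => ℓ ≠ i0), c ℓ * s ℓ ω} := by
    ext ω
    rw [Set.mem_setOf_eq, Set.mem_setOf_eq, hCval ω, htdef]
    constructor <;> intro h <;> linarith
  rw [hEq]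
  exact signSum_bound i0 Ω μ s hmeas hsign huni hindep c t ht
end
end
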